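/- arXiv:1903.03280 — 3 statements merged into one kernel-verified Lean document; each statement's English description precedes it below -/
import Mathlib

section
/- Geometric lemma: For finite point sets X ⊆ Y in R^d and any 0 ≤ r ≤ s, the difference of persistent Betti numbers of the Čech (or Vietoris–Rips) filtration satisfies |β_q^{r,s}(K(Y)) − β_q^{r,s}(K(X))| ≤ Σ_{j=q}^{q+1} |K_j(Y,s) \ K_j(X,s)|, where K_j(P,s) denotes the set of j-simplices in the complex K_s(P). -/
set_option autoImplicit false

open Submodule

/-- An abstract simplicial complex on vertex type `V`: a collection of finite nonempty
subsets closed under taking nonempty subsets. -/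
def IsComplex {V : Type*} (K : Set (Finset V)) : Prop :=
  ∀ σ ∈ K, σ.Nonempty ∧ ∀ τ : Finset V, τ ⊆ σ → τ.Nonempty → τ ∈ K

/-- The space of all `F₂`-chains on the vertex type `V`: the free `F₂`-vector space on
all finite subsets of `V`. -/
abbrev Chain (V : Type*) := Finset V →₀ ZMod 2

/-- The boundary map with `F₂`-coefficients, sending a simplex to the sum of its
codimension-one faces. -/
noncomputable def bdry (V : Type*) : Chain V →ₗ[ZMod 2] Chain V := by
  classical
  exact Finsupp.lsum (ZMod 2) fun σ =>
    LinearMap.toSpanSingleton (ZMod 2) (Chain V) (∑ x ∈ σ, Finsupp.single (σ.erase x) 1)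

/-- `C_q(K)`: the chain group of a complex `K`, the `F₂`-span of its `q`-simplices,
viewed as a subspace of the free `F₂`-vector space on all finite vertex sets. -/
noncomputable def chainGroup {V : Type*} (K : Set (Finset V)) (q : ℕ) :
    Submodule (ZMod 2) (Chain V) :=
  Submodule.span (ZMod 2)
    {c | ∃ σ ∈ K, σ.card = q + 1 ∧ c = Finsupp.single σ (1 : ZMod 2)}

/-- `Z_q(K)`: the cycle group of a complex `K`. -/
noncomputable def cycleGroup {V : Type*} (K : Set (Finset V)) (q : ℕ) :
    Submodule (ZMod 2) (Chain V) :=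
  chainGroup K q ⊓ LinearMap.ker (bdry V)

/-- `B_q(K)`: the boundary group of a complex `K`. -/
noncomputable def boundaryGroup {V : Type*} (K : Set (Finset V)) (q : ℕ) :
    Submodule (ZMod 2) (Chain V) :=
  Submodule.map (bdry V) (chainGroup K (q + 1))

/-- The `(r,s)`-persistent Betti number of a filtration
`Kf`: `dim (Z_q(K_r) / (Z_q(K_r) ∩ B_q(K_s)))`. -/
noncomputable def pBetti {V : Type*} (Kf : ℝ → Set (Finset V)) (q : ℕ) (r s : ℝ) : ℕ :=
  Module.finrank (ZMod 2)
    (↥(cycleGroup (Kf r) q) ⧸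
      (Submodule.comap (cycleGroup (Kf r) q).subtype (boundaryGroup (Kf s) q) :
        Submodule (ZMod 2) ↥(cycleGroup (Kf r) q)))

/-- Points of `ℝ^d`. -/
abbrev Pt (d : ℕ) := EuclideanSpace ℝ (Fin d)

/-- The Čech complex at scale `r` of a set `S ⊆ ℝ^d`: all finite nonempty `σ ⊆ S` whose
closed `r`-balls have a common point. -/
def cechCx (d : ℕ) (r : ℝ) (S : Set (Pt d)) : Set (Finset (Pt d)) :=
  {σ | ↑σ ⊆ S ∧ σ.Nonempty ∧ (⋂ x ∈ (σ : Set (Pt d)), Metric.closedBall x r).Nonempty}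

/-- The Vietoris–Rips complex at scale `r` of a set `S ⊆ ℝ^d`: all finite nonempty
`σ ⊆ S` of diameter at most `r`. -/
def ripsCx (d : ℕ) (r : ℝ) (S : Set (Pt d)) : Set (Finset (Pt d)) :=
  {σ | ↑σ ⊆ S ∧ σ.Nonempty ∧ Metric.diam (σ : Set (Pt d)) ≤ r}

/-- The `(r,s)`-persistent Betti number of the filtration `Kx` (Čech or Rips) built on the
point set `S ⊆ ℝ^d`. -/
noncomputable def pBettiPts {d : ℕ} (Kx : ℝ → Set (Pt d) → Set (Finset (Pt d)))
    (q : ℕ) (r s : ℝ) (S : Set (Pt d)) : ℕ :=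
  pBetti (fun t => Kx t S) q r s

set_option synthInstance.maxHeartbeats 1000000
set_option maxHeartbeats 1000000
section Helpers

open Module Set Submodule

/-! ### Geometric monotonicity lemmas -/

lemma Kx_mono_scale {d : ℕ} {Kx : ℝ → Set (Pt d) → Set (Finset (Pt d))}
    (hKx : Kx = cechCx d ∨ Kx = ripsCx d) {r s : ℝ} (hrs : r ≤ s) (S : Set (Pt d)) :
    Kx r S ⊆ Kx s S := by
  rcases hKx with h | h <;> subst h <;> rintro σ ⟨h1, h2, h3⟩ <;> refine ⟨h1, h2, ?_⟩
  · exact h3.mono (Set.iInter₂_mono fun x _ => Metric.closedBall_subset_closedBall hrs)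
  · exact h3.trans hrs

lemma Kx_mono_set {d : ℕ} {Kx : ℝ → Set (Pt d) → Set (Finset (Pt d))}
    (hKx : Kx = cechCx d ∨ Kx = ripsCx d) (t : ℝ) {S S' : Set (Pt d)} (hS : S ⊆ S') :
    Kx t S ⊆ Kx t S' := by
  rcases hKx with h | h <;> subst h <;> rintro σ ⟨h1, h2, h3⟩ <;>
    exact ⟨h1.trans hS, h2, h3⟩

lemma Kx_restrict' {d : ℕ} {Kx : ℝ → Set (Pt d) → Set (Finset (Pt d))}
    (hKx : Kx = cechCx d ∨ Kx = ripsCx d) (t : ℝ) {S S' : Set (Pt d)} {σ : Finset (Pt d)}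
    (h : σ ∈ Kx t S') (hσ : ↑σ ⊆ S) : σ ∈ Kx t S := by
  rcases hKx with hh | hh <;> subst hh <;> obtain ⟨h1, h2, h3⟩ := h <;> exact ⟨hσ, h2, h3⟩

lemma Kx_vertex_subset {d : ℕ} {Kx : ℝ → Set (Pt d) → Set (Finset (Pt d))}
    (hKx : Kx = cechCx d ∨ Kx = ripsCx d) (t : ℝ) {S : Set (Pt d)} {σ : Finset (Pt d)}
    (h : σ ∈ Kx t S) : ↑σ ⊆ S := by
  rcases hKx with hh | hh <;> subst hh <;> exact h.1

/-! ### Linear algebra lemmas -/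

variable {F M : Type*} [Field F] [AddCommGroup M] [Module F M]

lemma aux_sub (U U' W W' : Submodule F M) [FiniteDimensional F W']
    (hWW' : W ≤ W') (hUW : U' ⊓ W = U) (hU'W' : U' ≤ W') :
    finrank F U' + finrank F W ≤ finrank F W' + finrank F U := by
  haveI : FiniteDimensional F U' := Submodule.finiteDimensional_of_le hU'W'
  haveI : FiniteDimensional F W := Submodule.finiteDimensional_of_le hWW'
  have h := Submodule.finrank_sup_add_finrank_inf_eq U' W
  rw [hUW] at h
  have h2 : finrank F ↥(U' ⊔ W) ≤ finrank F W' :=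
    Submodule.finrank_mono (sup_le hU'W' hWW')
  omega

lemma rank_map_add (f : M →ₗ[F] M) (p : Submodule F M) [FiniteDimensional F p] :
    finrank F (Submodule.map f p) + finrank F ↥(p ⊓ LinearMap.ker f) = finrank F p := by
  have h := LinearMap.finrank_range_add_finrank_ker (f.comp p.subtype)
  rw [LinearMap.range_comp, Submodule.range_subtype] at h
  have h2 : finrank F ↥(LinearMap.ker (f.comp p.subtype)) = finrank F ↥(p ⊓ LinearMap.ker f) := by
    rw [LinearMap.ker_comp, ← Submodule.map_comap_subtype, Submodule.finrank_map_subtype_eq]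
  omega

/-! ### Chain group lemmas -/

lemma chainGroup_mono {V : Type*} {K K' : Set (Finset V)} (h : K ⊆ K') (q : ℕ) :
    chainGroup K q ≤ chainGroup K' q := by
  apply Submodule.span_mono
  rintro c ⟨σ, hσ, hc, rfl⟩
  exact ⟨σ, h hσ, hc, rfl⟩

lemma cycleGroup_mono {V : Type*} {K K' : Set (Finset V)} (h : K ⊆ K') (q : ℕ) :
    cycleGroup K q ≤ cycleGroup K' q :=
  inf_le_inf_right _ (chainGroup_mono h q)

lemma boundaryGroup_mono {V : Type*} {K K' : Set (Finset V)} (h : K ⊆ K') (q : ℕ) :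
    boundaryGroup K q ≤ boundaryGroup K' q :=
  Submodule.map_mono (chainGroup_mono h (q+1))

lemma chainGroup_gen_eq {V : Type*} (K : Set (Finset V)) (q : ℕ) :
    {c | ∃ σ ∈ K, σ.card = q + 1 ∧ c = Finsupp.single σ (1 : ZMod 2)} =
      (fun σ => Finsupp.single σ (1 : ZMod 2)) '' {σ | σ ∈ K ∧ σ.card = q + 1} := by
  ext c
  constructor
  · rintro ⟨σ, h1, h2, rfl⟩; exact ⟨σ, ⟨h1, h2⟩, rfl⟩
  · rintro ⟨σ, ⟨h1, h2⟩, rfl⟩; exact ⟨σ, h1, h2, rfl⟩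

lemma chainGroup_fd {V : Type*} {K : Set (Finset V)} (q : ℕ)
    (h : {σ | σ ∈ K ∧ σ.card = q + 1}.Finite) :
    FiniteDimensional (ZMod 2) (chainGroup K q) := by
  rw [chainGroup, chainGroup_gen_eq]
  exact FiniteDimensional.span_of_finite _ (h.image _)

lemma chainGroup_rank_le {V : Type*} (K K' : Set (Finset V)) (q : ℕ)
    (E : Finset (Finset V)) (hE : ∀ σ ∈ K, σ.card = q + 1 → σ ∉ K' → σ ∈ E)
    [FiniteDimensional (ZMod 2) (chainGroup K' q)] :
    finrank (ZMod 2) (chainGroup K q) ≤ finrank (ZMod 2) (chainGroup K' q) + E.card := by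
  classical
  set B : Submodule (ZMod 2) (Chain V) :=
    Submodule.span (ZMod 2) ↑(E.image (fun σ => Finsupp.single σ (1 : ZMod 2))) with hB
  haveI : FiniteDimensional (ZMod 2) B :=
    FiniteDimensional.span_of_finite _ (Finset.finite_toSet _)
  have hle : chainGroup K q ≤ chainGroup K' q ⊔ B := by
    apply Submodule.span_le.2
    rintro c ⟨σ, hσ, hcard, rfl⟩
    by_cases hσ' : σ ∈ K'
    · exact Submodule.mem_sup_left (Submodule.subset_span ⟨σ, hσ', hcard, rfl⟩)
    · refine Submodule.mem_sup_right (Submodule.subset_span ?_)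
      exact Finset.mem_coe.2 (Finset.mem_image.2 ⟨σ, hE σ hσ hcard hσ', rfl⟩)
  have h1 : finrank (ZMod 2) (chainGroup K q) ≤ finrank (ZMod 2) ↥(chainGroup K' q ⊔ B) :=
    Submodule.finrank_mono hle
  have h2 := Submodule.finrank_sup_add_finrank_inf_eq (chainGroup K' q) B
  have h3 : finrank (ZMod 2) B ≤ E.card := by
    calc finrank (ZMod 2) B ≤ (E.image (fun σ => Finsupp.single σ (1 : ZMod 2))).card :=
          finrank_span_finset_le_card _
      _ ≤ E.card := Finset.card_image_le
  omega

lemma pBetti_eq {V : Type*} (Kf : ℝ → Set (Finset V)) (q : ℕ) (r s : ℝ)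
    [FiniteDimensional (ZMod 2) (cycleGroup (Kf r) q)] :
    pBetti Kf q r s
      + finrank (ZMod 2) ↥(cycleGroup (Kf r) q ⊓ boundaryGroup (Kf s) q)
      = finrank (ZMod 2) ↥(cycleGroup (Kf r) q) := by
  unfold pBetti
  have h := Submodule.finrank_quotient_add_finrank
    (Submodule.comap (cycleGroup (Kf r) q).subtype (boundaryGroup (Kf s) q) :
      Submodule (ZMod 2) ↥(cycleGroup (Kf r) q))
  have h3 : finrank (ZMod 2)
      ↥(Submodule.map (cycleGroup (Kf r) q).subtype
        (Submodule.comap (cycleGroup (Kf r) q).subtype (boundaryGroup (Kf s) q) :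
          Submodule (ZMod 2) ↥(cycleGroup (Kf r) q)))
      = finrank (ZMod 2)
        ↥(Submodule.comap (cycleGroup (Kf r) q).subtype (boundaryGroup (Kf s) q) :
          Submodule (ZMod 2) ↥(cycleGroup (Kf r) q)) :=
    Submodule.finrank_map_subtype_eq _ _
  rw [Submodule.map_comap_subtype] at h3
  omega

end Helpers

section MainProof

open Module Set Submodule

lemma cycleGroup_le_chainGroup {V : Type*} (K : Set (Finset V)) (q : ℕ) :
    cycleGroup K q ≤ chainGroup K q := inf_le_left

/-- **Geometric lemma.** For finite point sets `X ⊆ Y ⊆ ℝ^d` and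
`0 ≤ r ≤ s`, the difference of persistent Betti numbers of the Čech (or Vietoris–Rips)
filtration satisfies
`|β_q^{r,s}(K(Y)) − β_q^{r,s}(K(X))| ≤ Σ_{j=q}^{q+1} |K_j(Y,s) \ K_j(X,s)|`,
where `K_j(P,s)` is the set of `j`-simplices of `K_s(P)`. -/
theorem geometric_lemma {d : ℕ} (Kx : ℝ → Set (Pt d) → Set (Finset (Pt d)))
    (hKx : Kx = cechCx d ∨ Kx = ripsCx d)
    (X Y : Finset (Pt d)) (hXY : X ⊆ Y) (q : ℕ) (r s : ℝ) (hr : 0 ≤ r) (hrs : r ≤ s) :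
    ((pBettiPts Kx q r s (↑Y) : ℤ) - (pBettiPts Kx q r s (↑X) : ℤ)).natAbs ≤
      {σ : Finset (Pt d) | σ ∈ Kx s ↑Y ∧ σ ∉ Kx s ↑X ∧ σ.card = q + 1}.ncard +
      {σ : Finset (Pt d) | σ ∈ Kx s ↑Y ∧ σ ∉ Kx s ↑X ∧ σ.card = q + 2}.ncard := by
  classical
  set F := ZMod 2 with hF
  -- finiteness of simplex sets
  have hfin : ∀ (t : ℝ) (n : ℕ) (P : Finset (Pt d)),
      {σ | σ ∈ Kx t (↑P : Set (Pt d)) ∧ σ.card = n}.Finite := by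
    intro t n P
    apply (P.powerset.finite_toSet).subset
    rintro σ ⟨h1, -⟩
    exact Finset.mem_coe.2 (Finset.mem_powerset.2
      (Finset.coe_subset.1 (Kx_vertex_subset hKx t h1)))
  -- finiteness of the difference sets
  have hD1fin : {σ : Finset (Pt d) | σ ∈ Kx s ↑Y ∧ σ ∉ Kx s ↑X ∧ σ.card = q + 1}.Finite :=
    (hfin s (q + 1) Y).subset (by rintro σ ⟨h1, -, h3⟩; exact ⟨h1, h3⟩)
  have hD2fin : {σ : Finset (Pt d) | σ ∈ Kx s ↑Y ∧ σ ∉ Kx s ↑X ∧ σ.card = q + 2}.Finite :=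
    (hfin s (q + 2) Y).subset (by rintro σ ⟨h1, -, h3⟩; exact ⟨h1, h3⟩)
  set D1 := hD1fin.toFinset with hD1
  set D2 := hD2fin.toFinset with hD2
  -- finite dimensionality
  haveI fdCyr : FiniteDimensional F (chainGroup (Kx r ↑Y) q) := chainGroup_fd q (hfin r _ Y)
  haveI fdCxr : FiniteDimensional F (chainGroup (Kx r ↑X) q) := chainGroup_fd q (hfin r _ X)
  haveI fdPy : FiniteDimensional F (chainGroup (Kx s ↑Y) (q + 1)) :=
    chainGroup_fd (q + 1) (hfin s _ Y)
  haveI fdPx : FiniteDimensional F (chainGroup (Kx s ↑X) (q + 1)) :=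
    chainGroup_fd (q + 1) (hfin s _ X)
  haveI fdZy : FiniteDimensional F (cycleGroup (Kx r ↑Y) q) :=
    Submodule.finiteDimensional_of_le (cycleGroup_le_chainGroup _ q)
  haveI fdZx : FiniteDimensional F (cycleGroup (Kx r ↑X) q) :=
    Submodule.finiteDimensional_of_le (cycleGroup_le_chainGroup _ q)
  haveI fdBy : FiniteDimensional F (boundaryGroup (Kx s ↑Y) q) :=
    Module.Finite.map (chainGroup (Kx s ↑Y) (q + 1)) (bdry (Pt d))
  -- basic inclusions
  have hKrXY : Kx r ↑X ⊆ Kx r ↑Y := Kx_mono_set hKx r (Finset.coe_subset.2 hXY)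
  have hKsXY : Kx s ↑X ⊆ Kx s ↑Y := Kx_mono_set hKx s (Finset.coe_subset.2 hXY)
  have hCxy : chainGroup (Kx r ↑X) q ≤ chainGroup (Kx r ↑Y) q := chainGroup_mono hKrXY q
  have hZxy : cycleGroup (Kx r ↑X) q ≤ cycleGroup (Kx r ↑Y) q := cycleGroup_mono hKrXY q
  have hBxy : boundaryGroup (Kx s ↑X) q ≤ boundaryGroup (Kx s ↑Y) q :=
    boundaryGroup_mono hKsXY q
  -- Betti number equations
  have ey : pBetti (fun t => Kx t (↑Y : Set (Pt d))) q r s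
      + finrank F ↥(cycleGroup (Kx r ↑Y) q ⊓ boundaryGroup (Kx s ↑Y) q)
      = finrank F ↥(cycleGroup (Kx r ↑Y) q) := pBetti_eq _ q r s
  have ex : pBetti (fun t => Kx t (↑X : Set (Pt d))) q r s
      + finrank F ↥(cycleGroup (Kx r ↑X) q ⊓ boundaryGroup (Kx s ↑X) q)
      = finrank F ↥(cycleGroup (Kx r ↑X) q) := pBetti_eq _ q r s
  -- (3)
  have i1 : finrank F ↥(cycleGroup (Kx r ↑X) q ⊓ boundaryGroup (Kx s ↑X) q)
      ≤ finrank F ↥(cycleGroup (Kx r ↑Y) q ⊓ boundaryGroup (Kx s ↑Y) q) := by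
    haveI : FiniteDimensional F ↥(cycleGroup (Kx r ↑Y) q ⊓ boundaryGroup (Kx s ↑Y) q) :=
      Submodule.finiteDimensional_of_le inf_le_left
    exact Submodule.finrank_mono (inf_le_inf hZxy hBxy)
  -- (4)
  have hZyCx : cycleGroup (Kx r ↑Y) q ⊓ chainGroup (Kx r ↑X) q = cycleGroup (Kx r ↑X) q := by
    apply le_antisymm
    · intro m hm
      rw [Submodule.mem_inf] at hm
      obtain ⟨hmy, hmx⟩ := hm
      rw [cycleGroup, Submodule.mem_inf] at hmy ⊢
      exact ⟨hmx, hmy.2⟩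
    · exact le_inf hZxy (cycleGroup_le_chainGroup _ q)
  have i2 : finrank F ↥(cycleGroup (Kx r ↑Y) q) + finrank F ↥(chainGroup (Kx r ↑X) q)
      ≤ finrank F ↥(chainGroup (Kx r ↑Y) q) + finrank F ↥(cycleGroup (Kx r ↑X) q) :=
    aux_sub _ _ _ _ hCxy hZyCx (cycleGroup_le_chainGroup _ q)
  -- (5)
  have i3 : finrank F ↥(chainGroup (Kx r ↑Y) q)
      ≤ finrank F ↥(chainGroup (Kx r ↑X) q) + D1.card := by
    apply chainGroup_rank_le
    intro σ hσ hcard hσ'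
    rw [hD1, Set.Finite.mem_toFinset]
    refine ⟨Kx_mono_scale hKx hrs _ hσ, ?_, hcard⟩
    intro hc
    exact hσ' (Kx_restrict' hKx r hσ (Kx_vertex_subset hKx s hc))
  -- (6)
  have hinfBx : (cycleGroup (Kx r ↑Y) q ⊓ boundaryGroup (Kx s ↑Y) q)
      ⊓ boundaryGroup (Kx s ↑X) q
      = cycleGroup (Kx r ↑Y) q ⊓ boundaryGroup (Kx s ↑X) q := by
    rw [inf_assoc, inf_eq_right.2 hBxy]
  have j2 : finrank F ↥(cycleGroup (Kx r ↑Y) q ⊓ boundaryGroup (Kx s ↑Y) q)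
        + finrank F ↥(boundaryGroup (Kx s ↑X) q)
      ≤ finrank F ↥(boundaryGroup (Kx s ↑Y) q)
        + finrank F ↥(cycleGroup (Kx r ↑Y) q ⊓ boundaryGroup (Kx s ↑X) q) :=
    aux_sub _ _ _ _ hBxy hinfBx inf_le_right
  -- (7)
  have j3y : finrank F ↥(boundaryGroup (Kx s ↑Y) q)
        + finrank F ↥(chainGroup (Kx s ↑Y) (q + 1) ⊓ LinearMap.ker (bdry (Pt d)))
      = finrank F ↥(chainGroup (Kx s ↑Y) (q + 1)) :=
    rank_map_add (bdry (Pt d)) (chainGroup (Kx s ↑Y) (q + 1))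
  have j3x : finrank F ↥(boundaryGroup (Kx s ↑X) q)
        + finrank F ↥(chainGroup (Kx s ↑X) (q + 1) ⊓ LinearMap.ker (bdry (Pt d)))
      = finrank F ↥(chainGroup (Kx s ↑X) (q + 1)) :=
    rank_map_add (bdry (Pt d)) (chainGroup (Kx s ↑X) (q + 1))
  -- (8)
  have j3k : finrank F ↥(chainGroup (Kx s ↑X) (q + 1) ⊓ LinearMap.ker (bdry (Pt d)))
      ≤ finrank F ↥(chainGroup (Kx s ↑Y) (q + 1) ⊓ LinearMap.ker (bdry (Pt d))) := by
    haveI : FiniteDimensional F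
        ↥(chainGroup (Kx s ↑Y) (q + 1) ⊓ LinearMap.ker (bdry (Pt d))) :=
      Submodule.finiteDimensional_of_le inf_le_left
    exact Submodule.finrank_mono (inf_le_inf_right _ (chainGroup_mono hKsXY (q + 1)))
  -- (9)
  have hinfZx : (cycleGroup (Kx r ↑Y) q ⊓ boundaryGroup (Kx s ↑X) q)
      ⊓ cycleGroup (Kx r ↑X) q
      = cycleGroup (Kx r ↑X) q ⊓ boundaryGroup (Kx s ↑X) q := by
    rw [inf_right_comm, inf_eq_right.2 hZxy]
  have j4 : finrank F ↥(cycleGroup (Kx r ↑Y) q ⊓ boundaryGroup (Kx s ↑X) q)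
        + finrank F ↥(cycleGroup (Kx r ↑X) q)
      ≤ finrank F ↥(cycleGroup (Kx r ↑Y) q)
        + finrank F ↥(cycleGroup (Kx r ↑X) q ⊓ boundaryGroup (Kx s ↑X) q) :=
    aux_sub _ _ _ _ hZxy hinfZx inf_le_left
  -- (10)
  have j5 : finrank F ↥(chainGroup (Kx s ↑Y) (q + 1))
      ≤ finrank F ↥(chainGroup (Kx s ↑X) (q + 1)) + D2.card := by
    apply chainGroup_rank_le
    intro σ hσ hcard hσ'
    rw [hD2, Set.Finite.mem_toFinset]
    exact ⟨hσ, fun hc => hσ' (Kx_restrict' hKx s hσ (Kx_vertex_subset hKx s hc)),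
      by omega⟩
  -- conclude
  have hb1 : pBettiPts Kx q r s (↑Y) = pBetti (fun t => Kx t (↑Y : Set (Pt d))) q r s := rfl
  have hb2 : pBettiPts Kx q r s (↑X) = pBetti (fun t => Kx t (↑X : Set (Pt d))) q r s := rfl
  rw [hb1, hb2, Set.ncard_eq_toFinset_card _ hD1fin, Set.ncard_eq_toFinset_card _ hD2fin,
    ← hD1, ← hD2]
  omega

end MainProof
end

section
/- Bounded quotient of cycle groups on adding points: with K_{r,a} = K_r(P ∩ B(z,a)) and K'_{r,a} = K_r((P ∪ Q) ∩ B(z,a)) (Čech or Rips), Q finite with Q ⊆ B(z,L), the dimension dim(Z_q(K'_{r,a}) / Z_q(K_{r,a})) is bounded, uniformly in a, by the (finite) number of q-simplices of K_r((P ∩ B(z, L + 2μ(r))) ∪ Q) that contain at least one vertex of Q, where μ(r) bounds the diameter of simplices at filtration time r. -/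
set_option autoImplicit false

open Submodule

/-- Bounded quotient of cycle groups on adding points: with
`K_{r,a} = K_r(P ∩ B(z,a))` and `K'_{r,a} = K_r((P ∪ Q) ∩ B(z,a))` (Čech or Rips),
`Q` finite with `Q ⊆ B(z,L)`, the dimension `dim (Z_q(K'_{r,a})/Z_q(K_{r,a}))` is
bounded, uniformly in `a`, by the (finite) number of `q`-simplices of
`K_r((P ∩ B(z, L + 2μ(r))) ∪ Q)` containing at least one vertex of `Q`, where `μ(r)`
bounds the diameter of simplices at filtration time `r`. -/
theorem cycle_quotient_bounded {d : ℕ} (Kx : ℝ → Set (Pt d) → Set (Finset (Pt d)))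
    (q : ℕ) (r : ℝ) (hr : 0 ≤ r)
    (μr : ℝ) (hKx : (Kx = cechCx d ∧ μr = 2 * r) ∨ (Kx = ripsCx d ∧ μr = r))
    (P Q : Set (Pt d)) (hP : ∀ x : Pt d, ¬ AccPt x (Filter.principal P))
    (hQfin : Q.Finite) (z : Pt d) (L : ℝ) (hL : 0 ≤ L) (hQL : Q ⊆ Metric.closedBall z L) :
    ({σ : Finset (Pt d) | σ ∈ Kx r ((P ∩ Metric.closedBall z (L + 2 * μr)) ∪ Q) ∧
        σ.card = q + 1 ∧ (Q ∩ ↑σ).Nonempty}).Finite ∧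
    ∀ a : ℝ,
      Module.rank (ZMod 2)
          (↥(cycleGroup (Kx r ((P ∪ Q) ∩ Metric.closedBall z a)) q) ⧸
            (Submodule.comap
                (cycleGroup (Kx r ((P ∪ Q) ∩ Metric.closedBall z a)) q).subtype
                (cycleGroup (Kx r (P ∩ Metric.closedBall z a)) q) :
              Submodule (ZMod 2)
                ↥(cycleGroup (Kx r ((P ∪ Q) ∩ Metric.closedBall z a)) q))) ≤
        (({σ : Finset (Pt d) | σ ∈ Kx r ((P ∩ Metric.closedBall z (L + 2 * μr)) ∪ Q) ∧
            σ.card = q + 1 ∧ (Q ∩ ↑σ).Nonempty}).ncard : Cardinal) := by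
  classical
  have hμ0 : 0 ≤ μr := by rcases hKx with ⟨-, h⟩ | ⟨-, h⟩ <;> subst h <;> linarith
  have hsub : ∀ (S : Set (Pt d)) (σ : Finset (Pt d)), σ ∈ Kx r S → ↑σ ⊆ S := by
    rcases hKx with ⟨h, -⟩ | ⟨h, -⟩ <;> subst h <;> exact fun S σ hσ => hσ.1
  have hmono : ∀ (S S' : Set (Pt d)) (σ : Finset (Pt d)),
      σ ∈ Kx r S → ↑σ ⊆ S' → σ ∈ Kx r S' := by
    rcases hKx with ⟨h, -⟩ | ⟨h, -⟩ <;> subst h <;>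
      exact fun S S' σ hσ hss => ⟨hss, hσ.2⟩
  have hdiam : ∀ (S : Set (Pt d)) (σ : Finset (Pt d)), σ ∈ Kx r S →
      ∀ x ∈ σ, ∀ y ∈ σ, dist x y ≤ μr := by
    rcases hKx with ⟨hK, hμ⟩ | ⟨hK, hμ⟩ <;> subst hK <;> subst hμ
    · rintro S σ ⟨-, -, p, hp⟩ x hx y hy
      simp only [Set.mem_iInter] at hp
      have h1 := hp x (by exact_mod_cast hx)
      have h2 := hp y (by exact_mod_cast hy)
      rw [Metric.mem_closedBall] at h1 h2
      calc dist x y ≤ dist x p + dist p y := dist_triangle x p y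
        _ = dist p x + dist p y := by rw [dist_comm x p]
        _ ≤ r + r := add_le_add h1 h2
        _ = 2 * r := by ring
    · rintro S σ ⟨-, -, hd⟩ x hx y hy
      exact (Metric.dist_le_diam_of_mem σ.finite_toSet.isBounded
        (by exact_mod_cast hx) (by exact_mod_cast hy)).trans hd
  set X := (P ∩ Metric.closedBall z (L + 2 * μr)) ∪ Q with hX
  have hXfin : X.Finite := by
    refine Set.Finite.union ?_ hQfin
    by_contra h
    rw [← Set.Infinite] at h
    obtain ⟨x, -, hx⟩ := h.exists_accPt_of_subset_isCompact
      (isCompact_closedBall z (L + 2 * μr)) Set.inter_subset_right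
    exact hP x (hx.mono (Filter.principal_mono.2 Set.inter_subset_left))
  set S₀ := {σ : Finset (Pt d) | σ ∈ Kx r X ∧ σ.card = q + 1 ∧ (Q ∩ ↑σ).Nonempty}
    with hS₀
  have hS0fin : S₀.Finite := by
    refine Set.Finite.subset hXfin.toFinset.powerset.finite_toSet ?_
    rintro σ ⟨hσ, -, -⟩
    simp only [Finset.mem_coe, Finset.mem_powerset]
    intro x hx
    rw [Set.Finite.mem_toFinset]
    exact hsub _ σ hσ hx
  have hchain : ∀ (Kc : Set (Finset (Pt d))) (c : Chain (Pt d)),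
      c ∈ chainGroup Kc q ↔ ∀ σ ∈ c.support, σ ∈ Kc ∧ σ.card = q + 1 := by
    intro Kc c
    have heq : chainGroup Kc q =
        Finsupp.supported (ZMod 2) (ZMod 2) {σ | σ ∈ Kc ∧ σ.card = q + 1} := by
      rw [Finsupp.supported_eq_span_single, chainGroup]
      congr 1
      ext c'
      simp only [Set.mem_setOf_eq, Set.mem_image]
      constructor
      · rintro ⟨σ, h1, h2, h3⟩; exact ⟨σ, ⟨h1, h2⟩, h3.symm⟩
      · rintro ⟨σ, ⟨h1, h2⟩, h3⟩; exact ⟨σ, h1, h2, h3.symm⟩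
    rw [heq, Finsupp.mem_supported]
    constructor
    · intro h σ hσ; exact h hσ
    · intro h σ hσ; exact h σ hσ
  refine ⟨hS0fin, fun a => ?_⟩
  set K' := Kx r ((P ∪ Q) ∩ Metric.closedBall z a) with hK'
  set K := Kx r (P ∩ Metric.closedBall z a) with hK
  set Z' := cycleGroup K' q with hZ'
  set N : Submodule (ZMod 2) Z' := Submodule.comap Z'.subtype (cycleGroup K q) with hN
  haveI : Fintype ↥S₀ := hS0fin.fintype
  set ψ : Z' →ₗ[ZMod 2] (↥S₀ → ZMod 2) :=
    LinearMap.pi (fun σ => (Finsupp.lapply σ.1).comp Z'.subtype) with hψ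
  have hker : LinearMap.ker ψ ≤ N := by
    rintro ⟨c, hc⟩ hkc
    have hc2 := hc
    rw [hZ', cycleGroup, Submodule.mem_inf] at hc2
    obtain ⟨hcchain, hcbdry⟩ := hc2
    have hzero : ∀ σ ∈ S₀, c σ = 0 := by
      intro σ hσ
      have h0 := LinearMap.mem_ker.1 hkc
      have h1 := congrFun h0 ⟨σ, hσ⟩
      simpa [hψ] using h1
    have hcK : c ∈ cycleGroup K q := by
      rw [cycleGroup, Submodule.mem_inf]
      refine ⟨(hchain K c).2 ?_, hcbdry⟩
      intro σ hσsupp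
      obtain ⟨hσK', hσcard⟩ := (hchain K' c).1 hcchain σ hσsupp
      have hQσ : ¬ (Q ∩ ↑σ).Nonempty := by
        intro hQσ
        have hσS₀ : σ ∈ S₀ := by
          refine ⟨hmono _ _ σ hσK' ?_, hσcard, hQσ⟩
          intro x hx
          obtain ⟨hxPQ, hxB⟩ := hsub _ σ hσK' hx
          rcases hxPQ with hxP | hxQ
          · left
            refine ⟨hxP, ?_⟩
            obtain ⟨y, hyQ, hyσ⟩ := hQσ
            have h1 : dist x y ≤ μr :=
              hdiam _ σ hσK' x (by exact_mod_cast hx) y (by exact_mod_cast hyσ)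
            have h2 : dist y z ≤ L := hQL hyQ
            rw [Metric.mem_closedBall]
            calc dist x z ≤ dist x y + dist y z := dist_triangle x y z
              _ ≤ μr + L := add_le_add h1 h2
              _ ≤ L + 2 * μr := by linarith
          · right; exact hxQ
        exact absurd (hzero σ hσS₀) (Finsupp.mem_support_iff.1 hσsupp)
      have hsubP : ↑σ ⊆ P ∩ Metric.closedBall z a := by
        intro x hx
        obtain ⟨hxPQ, hxB⟩ := hsub _ σ hσK' hx
        rcases hxPQ with hxP | hxQ
        · exact ⟨hxP, hxB⟩
        · exact absurd ⟨x, hxQ, hx⟩ hQσ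
      exact ⟨hmono _ _ σ hσK' hsubP, hσcard⟩
    exact Submodule.mem_comap.2 hcK
  calc Module.rank (ZMod 2) (Z' ⧸ N)
      ≤ Module.rank (ZMod 2) (Z' ⧸ LinearMap.ker ψ) := by
        refine LinearMap.rank_le_of_surjective
          (Submodule.mapQ (LinearMap.ker ψ) N LinearMap.id (by simpa using hker)) ?_
        intro x
        obtain ⟨y, rfl⟩ := N.mkQ_surjective x
        exact ⟨(LinearMap.ker ψ).mkQ y, by simp [Submodule.mapQ_apply]⟩
    _ = Module.rank (ZMod 2) (LinearMap.range ψ) := ψ.quotKerEquivRange.rank_eq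
    _ ≤ Module.rank (ZMod 2) (↥S₀ → ZMod 2) := Submodule.rank_le _
    _ = Fintype.card ↥S₀ := rank_fun'
    _ = (S₀.ncard : Cardinal) := by
        rw [← Nat.card_eq_fintype_card, Nat.card_coe_set_eq]
end

section
/- Almost-sure stabilization of the resampling difference for a stationary Poisson process: let P, P' be independent unit-intensity homogeneous Poisson processes on R^d, z ∈ Z^d, Q(z) = (−1/2,1/2]^d + z, P''(z) = (P \ Q(z)) ∪ (P' ∩ Q(z)), and B_n = [−n^{1/d}/2, n^{1/d}/2]^d. Then for each (r,s) with 0 ≤ r ≤ s, there exist an a.s. finite integer-valued random variable Δ_z^{r,s}(∞) and an a.s. finite random N_0 such that β_q^{r,s}(K(P ∩ B_n)) − β_q^{r,s}(K(P''(z) ∩ B_n)) = Δ_z^{r,s}(∞) almost surely for all n ≥ N_0. -/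
set_option autoImplicit false

open Submodule

open MeasureTheory in
/-- A point process `P` on `ℝ^d` is a Poisson point process with intensity function `f`
(w.r.t. the probability measure `μ`) if it is almost surely locally finite, the number of
its points in a region `A` is Poisson distributed with mean `∫ x in A, f x`, and the
point counts in disjoint regions are independent. -/
structure IsPoissonPP {Ω : Type*} [MeasurableSpace Ω] (μ : Measure Ω) {d : ℕ}
    (f : Pt d → ℝ) (P : Ω → Set (Pt d)) : Prop where
  locallyFinite : ∀ᵐ ω ∂μ, ∀ C : Set (Pt d), IsCompact C → (P ω ∩ C).Finite
  counts : ∀ A : Set (Pt d), MeasurableSet A → IntegrableOn f A volume →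
    ∀ n : ℕ, μ {ω | (P ω ∩ A).ncard = n ∧ (P ω ∩ A).Finite} =
      ENNReal.ofReal (Real.exp (-(∫ x in A, f x)) * (∫ x in A, f x) ^ n / n.factorial)
  indep : ∀ A B : Set (Pt d), MeasurableSet A → MeasurableSet B → Disjoint A B →
    ∀ sA sB : Set ℕ,
      μ ({ω | (P ω ∩ A).ncard ∈ sA} ∩ {ω | (P ω ∩ B).ncard ∈ sB}) =
        μ {ω | (P ω ∩ A).ncard ∈ sA} * μ {ω | (P ω ∩ B).ncard ∈ sB}

open MeasureTheory in
/-- Two point processes `P`, `P'` are independent if all their point counts are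
independent. -/
def IndepPP {Ω : Type*} [MeasurableSpace Ω] (μ : Measure Ω) {d : ℕ}
    (P P' : Ω → Set (Pt d)) : Prop :=
  ∀ A B : Set (Pt d), MeasurableSet A → MeasurableSet B → ∀ sA sB : Set ℕ,
    μ ({ω | (P ω ∩ A).ncard ∈ sA} ∩ {ω | (P' ω ∩ B).ncard ∈ sB}) =
      μ {ω | (P ω ∩ A).ncard ∈ sA} * μ {ω | (P' ω ∩ B).ncard ∈ sB}

/-- The centered cube `[-c/2, c/2]^d`. -/
def cubeC (d : ℕ) (c : ℝ) : Set (Pt d) := {x | ∀ i, |x i| ≤ c / 2}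

/-- The half-open unit cube `(-1/2, 1/2]^d + z` centered at `z`. -/
def cubeQ {d : ℕ} (z : Pt d) : Set (Pt d) :=
  {x | ∀ i, z i - 1 / 2 < x i ∧ x i ≤ z i + 1 / 2}

/-- The cube `[0, c]^d`. -/
def cube0 (d : ℕ) (c : ℝ) : Set (Pt d) := {x | ∀ i, 0 ≤ x i ∧ x i ≤ c}


/-! ### Auxiliary machinery for the stabilization proof -/

namespace ASRes
open Module
open scoped Classical

variable {V : Type*}

/-! #### Boundary map lemmas -/

lemma bdry_single (σ : Finset V) (a : ZMod 2) :
    bdry V (Finsupp.single σ a) = a • ∑ x ∈ σ, Finsupp.single (σ.erase x) (1 : ZMod 2) := by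
  simp only [bdry, Finsupp.lsum_single, LinearMap.toSpanSingleton_apply]

lemma bdry_bdry_single (σ : Finset V) :
    bdry V (bdry V (Finsupp.single σ (1 : ZMod 2))) = 0 := by
  rw [bdry_single, one_smul, map_sum]
  have h1 : ∀ τ : Finset V, bdry V (Finsupp.single τ (1 : ZMod 2))
      = ∑ x ∈ τ, Finsupp.single (τ.erase x) (1 : ZMod 2) := by
    intro τ; rw [bdry_single, one_smul]
  simp_rw [h1]
  rw [Finset.sum_sigma']
  refine Finset.sum_involution (fun p _ => ⟨p.2, p.1⟩) ?_ ?_ ?_ ?_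
  · intro p hp
    have h2 : ((σ.erase p.1).erase p.2) = ((σ.erase p.2).erase p.1) :=
      Finset.erase_right_comm
    show (Finsupp.single ((σ.erase p.1).erase p.2) (1 : ZMod 2))
        + Finsupp.single ((σ.erase p.2).erase p.1) 1 = 0
    rw [h2, ← Finsupp.single_add]
    norm_num
    decide
  · intro p hp _
    simp only [Finset.mem_sigma, Finset.mem_erase] at hp
    intro h
    have := congrArg Sigma.fst h
    exact hp.2.1 this
  · intro p hp
    simp only [Finset.mem_sigma, Finset.mem_erase] at hp ⊢
    exact ⟨hp.2.2, fun h => hp.2.1 h.symm, hp.1⟩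
  · intro p hp; rfl

lemma bdry_bdry (c : Chain V) : bdry V (bdry V c) = 0 := by
  induction c using Finsupp.induction_linear with
  | zero => simp
  | add f g hf hg => simp [map_add, hf, hg]
  | single a b =>
    have h : (Finsupp.single a b : Chain V) = b • Finsupp.single a (1 : ZMod 2) := by
      simp [Finsupp.smul_single]
    rw [h, map_smul, map_smul, bdry_bdry_single, smul_zero]

lemma bdry_mem_supported (A : Set V) (c : Chain V)
    (hc : c ∈ Finsupp.supported (ZMod 2) (ZMod 2) {τ : Finset V | ↑τ ⊆ A}) :
    bdry V c ∈ Finsupp.supported (ZMod 2) (ZMod 2) {τ : Finset V | ↑τ ⊆ A} := by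
  have hrepr : bdry V c = c.sum fun σ a =>
      a • ∑ x ∈ σ, Finsupp.single (σ.erase x) (1 : ZMod 2) := by
    conv_lhs => rw [← c.sum_single]
    rw [map_finsuppSum]
    exact Finsupp.sum_congr fun σ _ => bdry_single σ _
  rw [hrepr]
  refine Submodule.finsuppSum_mem _ _ _ _ fun σ hσ => Submodule.smul_mem _ _ ?_
  refine Submodule.sum_mem _ fun x hx => ?_
  refine Finsupp.single_mem_supported _ _ ?_
  have hσA : ↑σ ⊆ A := hc (by simpa using hσ)
  exact fun y hy => hσA (Finset.erase_subset _ _ hy)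

/-! #### Finite-dimensionality and rank lemmas -/

lemma fd_supported {α : Type*} (s : Set α) (hs : s.Finite) :
    FiniteDimensional (ZMod 2) (Finsupp.supported (ZMod 2) (ZMod 2) s) := by
  rw [Finsupp.supported_eq_span_single]
  exact FiniteDimensional.span_of_finite _ (hs.image _)

lemma finrank_supported_le {α : Type*} (s : Set α) (hs : s.Finite) :
    finrank (ZMod 2) (Finsupp.supported (ZMod 2) (ZMod 2) s) ≤ s.ncard := by
  rw [Finsupp.supported_eq_span_single]
  haveI : Fintype ((fun i => Finsupp.single i (1 : ZMod 2)) '' s) := (hs.image _).fintype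
  refine (finrank_span_le_card _).trans ?_
  rw [← Set.ncard_eq_toFinset_card']
  exact (Set.ncard_image_le hs).trans le_rfl

lemma key_ineq (A B A' B' : Submodule (ZMod 2) (Chain V)) [FiniteDimensional (ZMod 2) A']
    (hAA' : A ≤ A') (hB'A' : B' ≤ A') (htr : A ⊓ B' = B) :
    finrank (ZMod 2) A + finrank (ZMod 2) B' ≤ finrank (ZMod 2) A' + finrank (ZMod 2) B := by
  haveI : FiniteDimensional (ZMod 2) A := Submodule.finiteDimensional_of_le hAA'
  haveI : FiniteDimensional (ZMod 2) B' := Submodule.finiteDimensional_of_le hB'A'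
  have h := Submodule.finrank_sup_add_finrank_inf_eq A B'
  rw [htr] at h
  have h2 : finrank (ZMod 2) ↥(A ⊔ B') ≤ finrank (ZMod 2) A' :=
    Submodule.finrank_mono (sup_le hAA' hB'A')
  omega

lemma finrank_sup_le' (A B : Submodule (ZMod 2) (Chain V))
    [FiniteDimensional (ZMod 2) A] [FiniteDimensional (ZMod 2) B] :
    finrank (ZMod 2) ↥(A ⊔ B) ≤ finrank (ZMod 2) A + finrank (ZMod 2) B := by
  have h := Submodule.finrank_sup_add_finrank_inf_eq A B
  omega

/-! #### The persistent Betti identity -/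

lemma chainGroup_eq (K : Set (Finset V)) (q : ℕ) :
    chainGroup K q
      = Finsupp.supported (ZMod 2) (ZMod 2) {σ | σ ∈ K ∧ σ.card = q + 1} := by
  rw [Finsupp.supported_eq_span_single, chainGroup]
  congr 1
  ext c
  constructor
  · rintro ⟨σ, h1, h2, rfl⟩; exact ⟨σ, ⟨h1, h2⟩, rfl⟩
  · rintro ⟨σ, ⟨h1, h2⟩, rfl⟩; exact ⟨σ, h1, h2, rfl⟩

lemma finrank_comap_subtype {M : Type*} [AddCommGroup M] [Module (ZMod 2) M]
    (p q : Submodule (ZMod 2) M) :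
    finrank (ZMod 2) (Submodule.comap p.subtype q) = finrank (ZMod 2) ↥(p ⊓ q) := by
  have h : Submodule.map p.subtype (Submodule.comap p.subtype q) = p ⊓ q :=
    Submodule.map_comap_subtype p q
  rw [← h]
  exact (Submodule.equivMapOfInjective p.subtype (Submodule.injective_subtype p) _).finrank_eq

lemma betti_identity (Kr Ks : Set (Finset V)) (q : ℕ)
    (h1 : FiniteDimensional (ZMod 2) (chainGroup Kr q))
    (h2 : FiniteDimensional (ZMod 2) (chainGroup Ks (q + 1))) :
    finrank (ZMod 2)
        (↥(cycleGroup Kr q) ⧸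
          (Submodule.comap (cycleGroup Kr q).subtype (boundaryGroup Ks q) :
            Submodule (ZMod 2) ↥(cycleGroup Kr q)))
      + finrank (ZMod 2) ↥(chainGroup Ks (q + 1) ⊓ Submodule.comap (bdry V) (chainGroup Kr q))
      = finrank (ZMod 2) (cycleGroup Kr q) + finrank (ZMod 2) (cycleGroup Ks (q + 1)) := by
  set Z1 := cycleGroup Kr q with hZ1
  set Bs := boundaryGroup Ks q with hBs
  set Z2 := cycleGroup Ks (q + 1) with hZ2
  set MM := chainGroup Ks (q + 1) ⊓ Submodule.comap (bdry V) (chainGroup Kr q) with hMM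
  haveI : FiniteDimensional (ZMod 2) Z1 := Submodule.finiteDimensional_of_le inf_le_left
  haveI : FiniteDimensional (ZMod 2) Z2 := Submodule.finiteDimensional_of_le inf_le_left
  haveI : FiniteDimensional (ZMod 2) MM := Submodule.finiteDimensional_of_le inf_le_left
  have hA : finrank (ZMod 2)
        (↥Z1 ⧸ (Submodule.comap Z1.subtype Bs : Submodule (ZMod 2) ↥Z1))
      + finrank (ZMod 2) ↥(Z1 ⊓ Bs) = finrank (ZMod 2) Z1 := by
    rw [← finrank_comap_subtype Z1 Bs]
    exact Submodule.finrank_quotient_add_finrank _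
  have hmapMM : Submodule.map (bdry V) MM = Z1 ⊓ Bs := by
    apply le_antisymm
    · rintro x ⟨c, hc, rfl⟩
      obtain ⟨hcs, hcr⟩ := hc
      refine Submodule.mem_inf.2 ⟨Submodule.mem_inf.2 ⟨hcr, ?_⟩, ⟨c, hcs, rfl⟩⟩
      exact LinearMap.mem_ker.2 (bdry_bdry c)
    · rintro x ⟨hx1, ⟨c, hc, rfl⟩⟩
      obtain ⟨hxC, _⟩ := Submodule.mem_inf.1 hx1
      exact ⟨c, Submodule.mem_inf.2 ⟨hc, Submodule.mem_comap.2 hxC⟩, rfl⟩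
  have hkerMM : MM ⊓ LinearMap.ker (bdry V) = Z2 := by
    ext x
    rw [hMM, hZ2, cycleGroup]
    simp only [Submodule.mem_inf, Submodule.mem_comap, LinearMap.mem_ker]
    constructor
    · rintro ⟨⟨h1, _⟩, h3⟩; exact ⟨h1, h3⟩
    · rintro ⟨h1, h3⟩
      exact ⟨⟨h1, by rw [h3]; exact Submodule.zero_mem _⟩, h3⟩
  have hB : finrank (ZMod 2) MM
      = finrank (ZMod 2) ↥(Z1 ⊓ Bs) + finrank (ZMod 2) Z2 := by
    have hrn := LinearMap.finrank_range_add_finrank_ker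
      (((bdry V).comp (Submodule.subtype MM) : ↥MM →ₗ[ZMod 2] Chain V))
    rw [LinearMap.range_comp, Submodule.range_subtype, hmapMM] at hrn
    rw [LinearMap.ker_comp] at hrn
    rw [finrank_comap_subtype MM (LinearMap.ker (bdry V)), hkerMM] at hrn
    omega
  omega


/-- simplices with vertices in `A`. -/
def sSet (Φ : Finset V → Prop) (k : ℕ) (A : Set V) : Set (Finset V) :=
  {σ | ↑σ ⊆ A ∧ Φ σ ∧ σ.card = k}

lemma sSet_mono {Φ : Finset V → Prop} {k : ℕ} {A B : Set V} (h : A ⊆ B) :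
    sSet Φ k A ⊆ sSet Φ k B := fun σ hσ => ⟨hσ.1.trans h, hσ.2⟩

lemma sSet_inter (Φ : Finset V → Prop) (k : ℕ) (A B : Set V) :
    sSet Φ k A ∩ sSet Φ k B = sSet Φ k (A ∩ B) := by
  ext σ
  simp only [sSet, Set.mem_inter_iff, Set.mem_setOf_eq, Set.subset_inter_iff]
  tauto

lemma sSet_sub (Φ : Finset V → Prop) (k : ℕ) (A : Set V) :
    sSet Φ k A ⊆ {τ : Finset V | ↑τ ⊆ A} := fun _ h => h.1

lemma sSet_finite {Φ : Finset V → Prop} {k : ℕ} {A : Set V} (hA : A.Finite) :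
    (sSet Φ k A).Finite := by
  refine Set.Finite.subset (Set.Finite.ofFinset hA.toFinset.powerset ?_) (sSet_sub Φ k A)
  intro σ
  simp only [Finset.mem_powerset, Set.mem_setOf_eq, Finset.mem_coe]
  constructor
  · intro h x hx; exact hA.mem_toFinset.1 (h hx)
  · intro h x hx; exact hA.mem_toFinset.2 (h hx)

lemma finsetsub_finite {A : Set V} (hA : A.Finite) : ({τ : Finset V | ↑τ ⊆ A}).Finite := by
  refine Set.Finite.ofFinset hA.toFinset.powerset ?_
  intro σ
  simp only [Finset.mem_powerset, Set.mem_setOf_eq]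
  constructor
  · intro h x hx; exact hA.mem_toFinset.1 (h hx)
  · intro h x hx; exact hA.mem_toFinset.2 (h hx)

/-- The general family of submodules used in the stabilization argument. -/
noncomputable def fam (Φ₁ : Finset V → Prop) (k₁ : ℕ) (Ψ : Set V → Set (Finset V))
    (A : Set V) : Submodule (ZMod 2) (Chain V) :=
  Finsupp.supported (ZMod 2) (ZMod 2) (sSet Φ₁ k₁ A)
    ⊓ Submodule.comap (bdry V) (Finsupp.supported (ZMod 2) (ZMod 2) (Ψ A))

variable {Φ₁ : Finset V → Prop} {k₁ : ℕ} {Ψ : Set V → Set (Finset V)}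

lemma fam_mono (hΨ : ∀ ⦃A B : Set V⦄, A ⊆ B → Ψ A ⊆ Ψ B) {A B : Set V} (h : A ⊆ B) :
    fam Φ₁ k₁ Ψ A ≤ fam Φ₁ k₁ Ψ B :=
  inf_le_inf (Finsupp.supported_mono (sSet_mono h))
    (Submodule.comap_mono (Finsupp.supported_mono (hΨ h)))

lemma fam_inf (hΨ : ∀ A B : Set V, Ψ A ∩ Ψ B = Ψ (A ∩ B)) (A B : Set V) :
    fam Φ₁ k₁ Ψ A ⊓ fam Φ₁ k₁ Ψ B = fam Φ₁ k₁ Ψ (A ∩ B) := by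
  rw [fam, fam, fam, inf_inf_inf_comm, ← Finsupp.supported_inter, ← Submodule.comap_inf,
    ← Finsupp.supported_inter, sSet_inter, hΨ]

lemma fam_le (A : Set V) :
    fam Φ₁ k₁ Ψ A ≤ Finsupp.supported (ZMod 2) (ZMod 2) (sSet Φ₁ k₁ A) := inf_le_left

lemma fam_trace (hΨtr : ∀ A B : Set V, B ⊆ A → {τ : Finset V | ↑τ ⊆ B} ∩ Ψ A ⊆ Ψ B)
    (hΨ : ∀ ⦃A B : Set V⦄, A ⊆ B → Ψ A ⊆ Ψ B)
    {A B : Set V} (h : B ⊆ A) :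
    fam Φ₁ k₁ Ψ A ⊓ Finsupp.supported (ZMod 2) (ZMod 2) (sSet Φ₁ k₁ B) = fam Φ₁ k₁ Ψ B := by
  apply le_antisymm
  · rintro c ⟨⟨_, hc2⟩, hc3⟩
    refine ⟨hc3, ?_⟩
    have hb : bdry V c ∈ Finsupp.supported (ZMod 2) (ZMod 2) {τ : Finset V | ↑τ ⊆ B} :=
      bdry_mem_supported B c ((Finsupp.supported_mono (sSet_sub Φ₁ k₁ B)) hc3)
    have : bdry V c ∈ Finsupp.supported (ZMod 2) (ZMod 2) ({τ : Finset V | ↑τ ⊆ B} ∩ Ψ A) := by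
      rw [Finsupp.supported_inter]
      exact ⟨hb, hc2⟩
    exact (Finsupp.supported_mono (hΨtr A B h)) this
  · exact le_inf (fam_mono hΨ h) inf_le_left

lemma nat_seq_ec (a : ℕ → ℕ) (K : ℕ) (hmono : ∀ n m, n ≤ m → a n ≤ a m)
    (hbd : ∀ n, a n ≤ K) : ∃ N, ∀ n, N ≤ n → a n = a N := by
  have hne : (Set.range a).Nonempty := ⟨a 0, 0, rfl⟩
  have hbdd : BddAbove (Set.range a) := ⟨K, by rintro x ⟨n, rfl⟩; exact hbd n⟩
  obtain ⟨N, hN⟩ := Nat.sSup_mem hne hbdd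
  refine ⟨N, fun n hn => le_antisymm ?_ (hmono N n hn)⟩
  rw [hN]
  exact le_csSup hbdd ⟨n, rfl⟩

/-- Eventual constancy of the rank difference along the window filtration. -/
lemma fam_ec (hΨ : ∀ ⦃A B : Set V⦄, A ⊆ B → Ψ A ⊆ Ψ B)
    (hΨinf : ∀ A B : Set V, Ψ A ∩ Ψ B = Ψ (A ∩ B))
    (hΨtr : ∀ A B : Set V, B ⊆ A → {τ : Finset V | ↑τ ⊆ B} ∩ Ψ A ⊆ Ψ B)
    (SS TT : ℕ → Set V)
    (hST : ∀ n, SS n ⊆ TT n)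
    (hTmono : ∀ n m, n ≤ m → TT n ⊆ TT m)
    (htr : ∀ n m, n ≤ m → TT n ∩ SS m = SS n)
    (hTfin : ∀ n, (TT n).Finite)
    (G : Set V) (hG : G.Finite)
    (hGcap : ∀ n, sSet Φ₁ k₁ (TT n) \ sSet Φ₁ k₁ (SS n) ⊆ {σ : Finset V | ↑σ ⊆ G}) :
    ∃ (c : ℤ) (N : ℕ), ∀ n, N ≤ n →
      (finrank (ZMod 2) (fam Φ₁ k₁ Ψ (TT n)) : ℤ)
        - finrank (ZMod 2) (fam Φ₁ k₁ Ψ (SS n)) = c := by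
  have hSfin : ∀ n, (SS n).Finite := fun n => (hTfin n).subset (hST n)
  haveI hFDT : ∀ n, FiniteDimensional (ZMod 2)
      (Finsupp.supported (ZMod 2) (ZMod 2) (sSet Φ₁ k₁ (TT n))) :=
    fun n => fd_supported _ (sSet_finite (hTfin n))
  haveI hFDS : ∀ n, FiniteDimensional (ZMod 2)
      (Finsupp.supported (ZMod 2) (ZMod 2) (sSet Φ₁ k₁ (SS n))) :=
    fun n => fd_supported _ (sSet_finite (hSfin n))
  haveI hFDfT : ∀ n, FiniteDimensional (ZMod 2) (fam Φ₁ k₁ Ψ (TT n)) :=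
    fun n => Submodule.finiteDimensional_of_le (fam_le _)
  haveI hFDfS : ∀ n, FiniteDimensional (ZMod 2) (fam Φ₁ k₁ Ψ (SS n)) :=
    fun n => Submodule.finiteDimensional_of_le (fam_le _)
  have hle : ∀ n, finrank (ZMod 2) (fam Φ₁ k₁ Ψ (SS n))
      ≤ finrank (ZMod 2) (fam Φ₁ k₁ Ψ (TT n)) :=
    fun n => Submodule.finrank_mono (fam_mono hΨ (hST n))
  set a : ℕ → ℕ := fun n =>
    finrank (ZMod 2) (fam Φ₁ k₁ Ψ (TT n)) - finrank (ZMod 2) (fam Φ₁ k₁ Ψ (SS n)) with ha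
  -- monotone
  have hmono : ∀ n m, n ≤ m → a n ≤ a m := by
    intro n m hnm
    have h1 : finrank (ZMod 2) (fam Φ₁ k₁ Ψ (TT n)) + finrank (ZMod 2) (fam Φ₁ k₁ Ψ (SS m))
        ≤ finrank (ZMod 2) (fam Φ₁ k₁ Ψ (TT m)) + finrank (ZMod 2) (fam Φ₁ k₁ Ψ (SS n)) :=
      key_ineq (fam Φ₁ k₁ Ψ (TT n)) (fam Φ₁ k₁ Ψ (SS n)) (fam Φ₁ k₁ Ψ (TT m))
        (fam Φ₁ k₁ Ψ (SS m)) (fam_mono hΨ (hTmono n m hnm))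
        (fam_mono hΨ ((hST m).trans (le_refl _)))
        (by rw [fam_inf hΨinf, htr n m hnm])
    have h2 := hle n
    have h3 := hle m
    simp only [ha]
    omega
  -- bound
  set K : ℕ := ({σ : Finset V | ↑σ ⊆ G}).ncard with hK
  have hbd : ∀ n, a n ≤ K := by
    intro n
    have h1 : finrank (ZMod 2) (fam Φ₁ k₁ Ψ (TT n))
          + finrank (ZMod 2) (Finsupp.supported (ZMod 2) (ZMod 2) (sSet Φ₁ k₁ (SS n)))
        ≤ finrank (ZMod 2) (Finsupp.supported (ZMod 2) (ZMod 2) (sSet Φ₁ k₁ (TT n)))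
          + finrank (ZMod 2) (fam Φ₁ k₁ Ψ (SS n)) :=
      key_ineq (fam Φ₁ k₁ Ψ (TT n)) (fam Φ₁ k₁ Ψ (SS n))
        (Finsupp.supported (ZMod 2) (ZMod 2) (sSet Φ₁ k₁ (TT n)))
        (Finsupp.supported (ZMod 2) (ZMod 2) (sSet Φ₁ k₁ (SS n)))
        (fam_le _) (Finsupp.supported_mono (sSet_mono (hST n)))
        (fam_trace hΨtr hΨ (hST n))
    haveI := fd_supported (sSet Φ₁ k₁ (TT n) \ sSet Φ₁ k₁ (SS n))
      ((sSet_finite (hTfin n)).diff)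
    have h2 : finrank (ZMod 2)
        (Finsupp.supported (ZMod 2) (ZMod 2) (sSet Φ₁ k₁ (TT n)))
        ≤ finrank (ZMod 2) (Finsupp.supported (ZMod 2) (ZMod 2) (sSet Φ₁ k₁ (SS n))) + K := by
      have hsub : Finsupp.supported (ZMod 2) (ZMod 2) (sSet Φ₁ k₁ (TT n))
          ≤ Finsupp.supported (ZMod 2) (ZMod 2) (sSet Φ₁ k₁ (SS n))
            ⊔ Finsupp.supported (ZMod 2) (ZMod 2) (sSet Φ₁ k₁ (TT n) \ sSet Φ₁ k₁ (SS n)) := by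
        rw [← Finsupp.supported_union]
        apply Finsupp.supported_mono
        intro σ hσ
        by_cases h : σ ∈ sSet Φ₁ k₁ (SS n)
        · exact Or.inl h
        · exact Or.inr ⟨hσ, h⟩
      have t1 : finrank (ZMod 2) (Finsupp.supported (ZMod 2) (ZMod 2) (sSet Φ₁ k₁ (TT n)))
          ≤ finrank (ZMod 2) ↥(Finsupp.supported (ZMod 2) (ZMod 2) (sSet Φ₁ k₁ (SS n))
            ⊔ Finsupp.supported (ZMod 2) (ZMod 2) (sSet Φ₁ k₁ (TT n) \ sSet Φ₁ k₁ (SS n))) :=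
        Submodule.finrank_mono hsub
      have t2 : finrank (ZMod 2) ↥(Finsupp.supported (ZMod 2) (ZMod 2) (sSet Φ₁ k₁ (SS n))
            ⊔ Finsupp.supported (ZMod 2) (ZMod 2) (sSet Φ₁ k₁ (TT n) \ sSet Φ₁ k₁ (SS n)))
          ≤ finrank (ZMod 2) (Finsupp.supported (ZMod 2) (ZMod 2) (sSet Φ₁ k₁ (SS n)))
            + finrank (ZMod 2) (Finsupp.supported (ZMod 2) (ZMod 2)
              (sSet Φ₁ k₁ (TT n) \ sSet Φ₁ k₁ (SS n))) :=
        finrank_sup_le' _ _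
      have t3 : finrank (ZMod 2) (Finsupp.supported (ZMod 2) (ZMod 2)
          (sSet Φ₁ k₁ (TT n) \ sSet Φ₁ k₁ (SS n))) ≤ K := by
        refine (finrank_supported_le _ (((sSet_finite (hTfin n))).diff)).trans ?_
        rw [hK]
        exact Set.ncard_le_ncard (hGcap n) (finsetsub_finite hG)
      exact t1.trans (t2.trans (Nat.add_le_add_left t3 _))
    have h3 := hle n
    simp only [ha]
    omega
  obtain ⟨N, hN⟩ := nat_seq_ec a K hmono hbd
  refine ⟨(a N : ℤ), N, fun n hn => ?_⟩
  have h1 := hN n hn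
  have h2 := hle n
  have h3 := hle N
  simp only [ha] at h1 ⊢
  omega

lemma exists_phi {d : ℕ} (Kx : ℝ → Set (Pt d) → Set (Finset (Pt d)))
    (hKx : Kx = cechCx d ∨ Kx = ripsCx d) :
    ∃ Φ : ℝ → Finset (Pt d) → Prop,
      (∀ t A σ, σ ∈ Kx t A ↔ ↑σ ⊆ A ∧ Φ t σ) ∧
      (∀ t σ x y, 0 ≤ t → Φ t σ → x ∈ σ → y ∈ σ → dist x y ≤ 2 * t) := by
  rcases hKx with rfl | rfl
  · refine ⟨fun t σ => σ.Nonempty ∧ (⋂ x ∈ (σ : Set (Pt d)), Metric.closedBall x t).Nonempty,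
      fun t A σ => Iff.rfl, ?_⟩
    intro t σ x y ht hΦ hx hy
    obtain ⟨p, hp⟩ := hΦ.2
    simp only [Set.mem_iInter] at hp
    have hxp : dist p x ≤ t := Metric.mem_closedBall.1 (hp x (by exact_mod_cast hx))
    have hyp : dist p y ≤ t := Metric.mem_closedBall.1 (hp y (by exact_mod_cast hy))
    calc dist x y ≤ dist x p + dist p y := dist_triangle _ _ _
      _ ≤ t + t := by rw [dist_comm x p]; exact add_le_add hxp hyp
      _ = 2 * t := by ring
  · refine ⟨fun t σ => σ.Nonempty ∧ Metric.diam (σ : Set (Pt d)) ≤ t,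
      fun t A σ => Iff.rfl, ?_⟩
    intro t σ x y ht hΦ hx hy
    have hb : Bornology.IsBounded (σ : Set (Pt d)) := σ.finite_toSet.isBounded
    have := Metric.dist_le_diam_of_mem hb (by exact_mod_cast hx) (by exact_mod_cast hy)
    linarith [hΦ.2]

lemma norm_le_of_coords {d : ℕ} (x : Pt d) (R : ℝ) (hR : 0 ≤ R) (h : ∀ i, |x i| ≤ R) :
    ‖x‖ ≤ Real.sqrt d * R := by
  rw [EuclideanSpace.norm_eq]
  have h1 : ∑ i, ‖x i‖ ^ 2 ≤ ∑ _i : Fin d, R ^ 2 := by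
    refine Finset.sum_le_sum fun i _ => ?_
    rw [Real.norm_eq_abs]
    have := h i
    nlinarith [abs_nonneg (x i)]
  have h2 : Real.sqrt (∑ i, ‖x i‖ ^ 2) ≤ Real.sqrt ((d : ℝ) * R ^ 2) := by
    refine Real.sqrt_le_sqrt ?_
    simpa using h1
  refine h2.trans ?_
  rw [Real.sqrt_mul (by positivity), Real.sqrt_sq hR]

/-- the window cubes -/
noncomputable def Bwin (d : ℕ) (n : ℕ) : Set (Pt d) := cubeC d ((n : ℝ) ^ ((1 : ℝ) / d))

lemma Bwin_mono {d : ℕ} {n m : ℕ} (h : n ≤ m) : Bwin d n ⊆ Bwin d m := by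
  intro x hx i
  refine (hx i).trans ?_
  have : ((n : ℝ)) ^ ((1:ℝ)/d) ≤ ((m : ℝ)) ^ ((1:ℝ)/d) :=
    Real.rpow_le_rpow (by positivity) (by exact_mod_cast h) (by positivity)
  linarith

lemma Bwin_absorb {d : ℕ} (hd : 1 ≤ d) (R : ℝ) :
    ∃ N : ℕ, ∀ n, N ≤ n → ∀ x : Pt d, (∀ i, |x i| ≤ R) → x ∈ Bwin d n := by
  rcases le_or_gt R 0 with hR | hR
  · refine ⟨1, fun n hn x hx i => ?_⟩
    refine (hx i).trans (hR.trans ?_)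
    positivity
  · refine ⟨⌈(2*R) ^ d⌉₊ + 1, fun n hn x hx i => ?_⟩
    have hn1 : ((2*R) ^ d : ℝ) ≤ (n : ℝ) := by
      refine (Nat.le_ceil _).trans ?_
      exact_mod_cast Nat.le_of_succ_le hn
    have h2R : (0:ℝ) ≤ 2 * R := by linarith
    have hd0 : (d:ℝ) ≠ 0 := by positivity
    have key : (2*R) ≤ (n : ℝ) ^ ((1:ℝ)/d) := by
      have := Real.rpow_le_rpow (by positivity) hn1 (le_of_lt (by positivity : (0:ℝ) < 1/d))
      rw [← Real.rpow_natCast (2*R) d, ← Real.rpow_mul h2R] at this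
      rw [mul_one_div, div_self hd0, Real.rpow_one] at this
      exact this
    have := hx i
    show |x i| ≤ _ / 2
    linarith

lemma cubeQ_bounded {d : ℕ} (z : Pt d) :
    ∃ R : ℝ, 0 ≤ R ∧ ∀ x ∈ cubeQ z, ∀ i, |x i| ≤ R := by
  refine ⟨(∑ j, |z j|) + 1, by positivity, fun x hx i => ?_⟩
  obtain ⟨h1, h2⟩ := hx i
  have hzi : |z i| ≤ ∑ j, |z j| :=
    Finset.single_le_sum (fun j _ => abs_nonneg (z j)) (Finset.mem_univ i)
  rw [abs_le]
  constructor
  · have : -(|z i|) ≤ z i := neg_abs_le _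
    nlinarith
  · have : z i ≤ |z i| := le_abs_self _
    nlinarith

lemma finite_in_window {d : ℕ} (T : Set (Pt d))
    (hloc : ∀ C : Set (Pt d), IsCompact C → (T ∩ C).Finite) (n : ℕ) :
    (T ∩ Bwin d n).Finite := by
  set c := ((n : ℝ) ^ ((1:ℝ)/d)) with hc
  have hc0 : 0 ≤ c := by positivity
  have hsub : Bwin d n ⊆ Metric.closedBall 0 (Real.sqrt d * (c/2)) := by
    intro x hx
    rw [Metric.mem_closedBall, dist_zero_right]
    exact norm_le_of_coords x (c/2) (by positivity) hx
  exact ((hloc _ (isCompact_closedBall _ _)).subset (Set.inter_subset_inter_right _ hsub))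

/-! #### Deterministic stabilization: one inclusion -/

lemma det_half {d : ℕ} (Kx : ℝ → Set (Pt d) → Set (Finset (Pt d)))
    (hKx : Kx = cechCx d ∨ Kx = ripsCx d)
    (q : ℕ) (r s : ℝ) (hr : 0 ≤ r) (hrs : r ≤ s)
    (S T : Set (Pt d)) (hST : S ⊆ T)
    (hloc : ∀ C : Set (Pt d), IsCompact C → (T ∩ C).Finite)
    (hFfin : (T \ S).Finite) :
    ∃ (c : ℤ) (N : ℕ), ∀ n, N ≤ n →
      (pBettiPts Kx q r s (T ∩ Bwin d n) : ℤ)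
        - (pBettiPts Kx q r s (S ∩ Bwin d n)) = c := by
  obtain ⟨Φ, hmem, hdiam⟩ := exists_phi Kx hKx
  have hs0 : 0 ≤ s := hr.trans hrs
  -- conversion of chain groups
  have hcg : ∀ (t : ℝ) (A : Set (Pt d)) (k : ℕ),
      chainGroup (Kx t A) k
        = Finsupp.supported (ZMod 2) (ZMod 2) (sSet (Φ t) (k + 1) A) := by
    intro t A k
    rw [chainGroup_eq]
    congr 1
    ext σ
    simp only [Set.mem_setOf_eq, sSet, hmem]
    tauto
  -- window families
  have hSTn : ∀ n : ℕ, S ∩ Bwin d n ⊆ T ∩ Bwin d n :=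
    fun n => Set.inter_subset_inter_left _ hST
  have hTmono : ∀ n m : ℕ, n ≤ m → T ∩ Bwin d n ⊆ T ∩ Bwin d m :=
    fun n m h => Set.inter_subset_inter_right _ (Bwin_mono h)
  have htrn : ∀ n m : ℕ, n ≤ m → (T ∩ Bwin d n) ∩ (S ∩ Bwin d m) = S ∩ Bwin d n := by
    intro n m h
    ext x
    constructor
    · rintro ⟨⟨hxT, hxB⟩, hxS, _⟩; exact ⟨hxS, hxB⟩
    · rintro ⟨hxS, hxB⟩; exact ⟨⟨hST hxS, hxB⟩, hxS, Bwin_mono h hxB⟩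
  have hTfin : ∀ n : ℕ, (T ∩ Bwin d n).Finite := fun n => finite_in_window T hloc n
  have hSfin : ∀ n : ℕ, (S ∩ Bwin d n).Finite := fun n => (hTfin n).subset (hSTn n)
  -- the stable region G
  set G : Set (Pt d) := T ∩ (⋃ y ∈ T \ S, Metric.closedBall y (2 * s)) with hGdef
  have hG : G.Finite := by
    refine hloc _ ?_
    exact hFfin.isCompact_biUnion (fun y _ => isCompact_closedBall _ _)
  have hGcap : ∀ t : ℝ, 0 ≤ t → t ≤ s → ∀ k n : ℕ,
      sSet (Φ t) k (T ∩ Bwin d n) \ sSet (Φ t) k (S ∩ Bwin d n)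
        ⊆ {σ : Finset (Pt d) | ↑σ ⊆ G} := by
    intro t ht hts k n σ hσ
    obtain ⟨⟨hσT, hΦσ, hcard⟩, hnot⟩ := hσ
    have hex : ∃ x ∈ σ, x ∈ T \ S := by
      by_contra hcon
      push_neg at hcon
      refine hnot ⟨?_, hΦσ, hcard⟩
      intro x hx
      have hx' : x ∈ σ := hx
      have hxT : x ∈ T ∩ Bwin d n := hσT hx
      rcases hxT with ⟨hxT1, hxB⟩
      by_cases hxS : x ∈ S
      · exact ⟨hxS, hxB⟩
      · exact absurd ⟨hxT1, hxS⟩ (hcon x hx')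
    obtain ⟨x₀, hx₀σ, hx₀⟩ := hex
    intro y hy
    have hyσ : y ∈ σ := hy
    have hyT : y ∈ T ∩ Bwin d n := hσT hy
    refine ⟨hyT.1, ?_⟩
    refine Set.mem_biUnion hx₀ ?_
    rw [Metric.mem_closedBall]
    have hdy : dist y x₀ ≤ 2 * t := hdiam t σ y x₀ ht hΦσ hyσ hx₀σ
    linarith
  -- the three families
  set Ψ0 : Set (Pt d) → Set (Finset (Pt d)) := fun _ => (∅ : Set (Finset (Pt d))) with hΨ0
  set Ψr : Set (Pt d) → Set (Finset (Pt d)) := fun A => sSet (Φ r) (q + 1) A with hΨr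
  have hΨ0mono : ∀ ⦃A B : Set (Pt d)⦄, A ⊆ B → Ψ0 A ⊆ Ψ0 B := fun A B _ => le_refl _
  have hΨ0inf : ∀ A B : Set (Pt d), Ψ0 A ∩ Ψ0 B = Ψ0 (A ∩ B) := fun A B => by
    simp [hΨ0]
  have hΨ0tr : ∀ A B : Set (Pt d), B ⊆ A →
      {τ : Finset (Pt d) | ↑τ ⊆ B} ∩ Ψ0 A ⊆ Ψ0 B := fun A B _ => by
    simp [hΨ0]
  have hΨrmono : ∀ ⦃A B : Set (Pt d)⦄, A ⊆ B → Ψr A ⊆ Ψr B := fun A B h => sSet_mono h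
  have hΨrinf : ∀ A B : Set (Pt d), Ψr A ∩ Ψr B = Ψr (A ∩ B) := fun A B =>
    sSet_inter _ _ _ _
  have hΨrtr : ∀ A B : Set (Pt d), B ⊆ A →
      {τ : Finset (Pt d) | ↑τ ⊆ B} ∩ Ψr A ⊆ Ψr B := by
    rintro A B hBA τ ⟨hτB, hτΨ, hΦτ, hcard⟩
    exact ⟨hτB, hΦτ, hcard⟩
  -- identification of the groups with `fam`
  have hZfam : ∀ (t : ℝ) (k : ℕ) (A : Set (Pt d)),
      cycleGroup (Kx t A) k = fam (Φ t) (k + 1) Ψ0 A := by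
    intro t k A
    rw [cycleGroup, hcg, fam]
    congr 1
    have h1 : Finsupp.supported (ZMod 2) (ZMod 2) (Ψ0 A) = ⊥ := by
      rw [hΨ0]; exact Finsupp.supported_empty
    rw [h1]
    rfl
  have hMfam : ∀ A : Set (Pt d),
      chainGroup (Kx s A) (q + 1)
          ⊓ Submodule.comap (bdry (Pt d)) (chainGroup (Kx r A) q)
        = fam (Φ s) (q + 1 + 1) Ψr A := by
    intro A
    rw [hcg, hcg, fam, hΨr]
  -- the betti identity at a finite window
  have hid : ∀ A : Set (Pt d), A.Finite →
      pBettiPts Kx q r s A + finrank (ZMod 2) (fam (Φ s) (q + 1 + 1) Ψr A)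
        = finrank (ZMod 2) (fam (Φ r) (q + 1) Ψ0 A)
          + finrank (ZMod 2) (fam (Φ s) (q + 1 + 1) Ψ0 A) := by
    intro A hA
    have h1 : FiniteDimensional (ZMod 2) (chainGroup (Kx r A) q) := by
      rw [hcg]; exact fd_supported _ (sSet_finite hA)
    have h2 : FiniteDimensional (ZMod 2) (chainGroup (Kx s A) (q + 1)) := by
      rw [hcg]; exact fd_supported _ (sSet_finite hA)
    have hb := betti_identity (Kx r A) (Kx s A) q h1 h2
    have hb0 : pBettiPts Kx q r s A
        = finrank (ZMod 2)
            (↥(cycleGroup (Kx r A) q) ⧸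
              (Submodule.comap (cycleGroup (Kx r A) q).subtype (boundaryGroup (Kx s A) q) :
                Submodule (ZMod 2) ↥(cycleGroup (Kx r A) q))) := rfl
    rw [hb0, ← hZfam r q A, ← hZfam s (q + 1) A, ← hMfam A]
    exact hb
  -- eventual constancy of the three differences
  obtain ⟨c1, N1, hc1⟩ := fam_ec (Φ₁ := Φ r) (k₁ := q + 1) (Ψ := Ψ0)
    hΨ0mono hΨ0inf hΨ0tr (fun n => S ∩ Bwin d n) (fun n => T ∩ Bwin d n)
    hSTn hTmono htrn hTfin G hG (fun n => hGcap r hr hrs (q + 1) n)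
  obtain ⟨c2, N2, hc2⟩ := fam_ec (Φ₁ := Φ s) (k₁ := q + 1 + 1) (Ψ := Ψ0)
    hΨ0mono hΨ0inf hΨ0tr (fun n => S ∩ Bwin d n) (fun n => T ∩ Bwin d n)
    hSTn hTmono htrn hTfin G hG (fun n => hGcap s hs0 le_rfl (q + 1 + 1) n)
  obtain ⟨cM, NM, hcM⟩ := fam_ec (Φ₁ := Φ s) (k₁ := q + 1 + 1) (Ψ := Ψr)
    hΨrmono hΨrinf hΨrtr (fun n => S ∩ Bwin d n) (fun n => T ∩ Bwin d n)
    hSTn hTmono htrn hTfin G hG (fun n => hGcap s hs0 le_rfl (q + 1 + 1) n)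
  refine ⟨c1 + c2 - cM, max N1 (max N2 NM), fun n hn => ?_⟩
  have hn1 : N1 ≤ n := le_trans (le_max_left _ _) hn
  have hn2 : N2 ≤ n := le_trans (le_max_left _ _) (le_trans (le_max_right _ _) hn)
  have hn3 : NM ≤ n := le_trans (le_max_right _ _) (le_trans (le_max_right _ _) hn)
  have e1 := hc1 n hn1
  have e2 := hc2 n hn2
  have e3 := hcM n hn3
  have iT := hid (T ∩ Bwin d n) (hTfin n)
  have iS := hid (S ∩ Bwin d n) (hSfin n)
  have iT' : (pBettiPts Kx q r s (T ∩ Bwin d n) : ℤ)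
      + (finrank (ZMod 2) (fam (Φ s) (q + 1 + 1) Ψr (T ∩ Bwin d n)) : ℤ)
      = (finrank (ZMod 2) (fam (Φ r) (q + 1) Ψ0 (T ∩ Bwin d n)) : ℤ)
        + (finrank (ZMod 2) (fam (Φ s) (q + 1 + 1) Ψ0 (T ∩ Bwin d n)) : ℤ) := by
    exact_mod_cast iT
  have iS' : (pBettiPts Kx q r s (S ∩ Bwin d n) : ℤ)
      + (finrank (ZMod 2) (fam (Φ s) (q + 1 + 1) Ψr (S ∩ Bwin d n)) : ℤ)
      = (finrank (ZMod 2) (fam (Φ r) (q + 1) Ψ0 (S ∩ Bwin d n)) : ℤ)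
        + (finrank (ZMod 2) (fam (Φ s) (q + 1 + 1) Ψ0 (S ∩ Bwin d n)) : ℤ) := by
    exact_mod_cast iS
  omega

/-! #### Deterministic stabilization: resampling difference -/

lemma det {d : ℕ} (Kx : ℝ → Set (Pt d) → Set (Finset (Pt d)))
    (hKx : Kx = cechCx d ∨ Kx = ripsCx d)
    (q : ℕ) (r s : ℝ) (hr : 0 ≤ r) (hrs : r ≤ s)
    (X Y W : Set (Pt d))
    (hlocX : ∀ C : Set (Pt d), IsCompact C → (X ∩ C).Finite)
    (hlocY : ∀ C : Set (Pt d), IsCompact C → (Y ∩ C).Finite)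
    (hagree : X \ W = Y \ W)
    (hWbd : ∃ R : ℝ, 0 ≤ R ∧ ∀ x ∈ W, ∀ i, |x i| ≤ R) :
    ∃ (c : ℤ) (N : ℕ), ∀ n, N ≤ n →
      (pBettiPts Kx q r s (X ∩ Bwin d n) : ℤ)
        - (pBettiPts Kx q r s (Y ∩ Bwin d n)) = c := by
  obtain ⟨R, hR0, hRW⟩ := hWbd
  set T : Set (Pt d) := X ∪ Y with hT
  have hlocT : ∀ C : Set (Pt d), IsCompact C → (T ∩ C).Finite := by
    intro C hC
    have : T ∩ C = (X ∩ C) ∪ (Y ∩ C) := by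
      rw [hT, Set.union_inter_distrib_right]
    rw [this]
    exact (hlocX C hC).union (hlocY C hC)
  have hTX : T \ X ⊆ W := by
    rintro t ⟨htT, htX⟩
    by_contra htW
    rcases htT with htX' | htY
    · exact htX htX'
    · have : t ∈ Y \ W := ⟨htY, htW⟩
      rw [← hagree] at this
      exact htX this.1
  have hTY : T \ Y ⊆ W := by
    rintro t ⟨htT, htY⟩
    by_contra htW
    rcases htT with htX' | htY'
    · have : t ∈ X \ W := ⟨htX', htW⟩
      rw [hagree] at this
      exact htY this.1
    · exact htY htY'
  have hWball : W ⊆ Metric.closedBall 0 (Real.sqrt d * R) := by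
    intro x hx
    rw [Metric.mem_closedBall, dist_zero_right]
    exact norm_le_of_coords x R hR0 (hRW x hx)
  have hfinW : (T ∩ W).Finite := by
    refine ((hlocT _ (isCompact_closedBall (0 : Pt d) (Real.sqrt d * R))).subset ?_)
    exact Set.inter_subset_inter_right _ hWball
  have hFX : (T \ X).Finite := hfinW.subset (fun t ht => ⟨ht.1, hTX ht⟩)
  have hFY : (T \ Y).Finite := hfinW.subset (fun t ht => ⟨ht.1, hTY ht⟩)
  obtain ⟨cX, NX, hcX⟩ := det_half Kx hKx q r s hr hrs X T Set.subset_union_left hlocT hFX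
  obtain ⟨cY, NY, hcY⟩ := det_half Kx hKx q r s hr hrs Y T Set.subset_union_right hlocT hFY
  refine ⟨cY - cX, max NX NY, fun n hn => ?_⟩
  have e1 := hcX n (le_trans (le_max_left _ _) hn)
  have e2 := hcY n (le_trans (le_max_right _ _) hn)
  omega

end ASRes

open MeasureTheory in
/-- Almost-sure stabilization of the resampling difference for a
stationary Poisson process: let `P`, `P'` be independent unit-intensity homogeneous
Poisson processes on `ℝ^d`, `z ∈ ℤ^d`, `Q(z) = (−1/2,1/2]^d + z`,
`P''(z) = (P \ Q(z)) ∪ (P' ∩ Q(z))` and `B_n = [−n^{1/d}/2, n^{1/d}/2]^d`.  Then for each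
`0 ≤ r ≤ s` there exist an a.s. finite integer-valued random variable `Δ` and an a.s.
finite random index `N₀` such that
`β_q^{r,s}(K(P ∩ B_n)) − β_q^{r,s}(K(P''(z) ∩ B_n)) = Δ` a.s. for all `n ≥ N₀`. -/
theorem as_stabilization_resampling {Ω : Type*} [MeasurableSpace Ω]
    (μ : Measure Ω) [IsProbabilityMeasure μ] {d : ℕ} (hd : 1 ≤ d)
    (P P' : Ω → Set (Pt d))
    (hP : IsPoissonPP μ (fun _ : Pt d => (1 : ℝ)) P)
    (hP' : IsPoissonPP μ (fun _ : Pt d => (1 : ℝ)) P')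
    (hind : IndepPP μ P P')
    (z : Fin d → ℤ)
    (Kx : ℝ → Set (Pt d) → Set (Finset (Pt d))) (hKx : Kx = cechCx d ∨ Kx = ripsCx d)
    (q : ℕ) (r s : ℝ) (hr : 0 ≤ r) (hrs : r ≤ s) :
    ∃ (Δ : Ω → ℤ) (N₀ : Ω → ℕ), ∀ᵐ ω ∂μ, ∀ n : ℕ, N₀ ω ≤ n →
      (pBettiPts Kx q r s (P ω ∩ cubeC d ((n : ℝ) ^ ((1 : ℝ) / d))) : ℤ) -
        (pBettiPts Kx q r s
          (((P ω \ cubeQ (WithLp.toLp 2 (fun i => (z i : ℝ)) : Pt d)) ∪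
              (P' ω ∩ cubeQ (WithLp.toLp 2 (fun i => (z i : ℝ)) : Pt d))) ∩
            cubeC d ((n : ℝ) ^ ((1 : ℝ) / d))) : ℤ) = Δ ω := by
  classical
  set W : Set (Pt d) := cubeQ (WithLp.toLp 2 (fun i => (z i : ℝ)) : Pt d) with hW
  set Y : Ω → Set (Pt d) := fun ω =>
    (P ω \ W) ∪ (P' ω ∩ W) with hY
  set D : Ω → ℕ → ℤ := fun ω n =>
    (pBettiPts Kx q r s (P ω ∩ cubeC d ((n : ℝ) ^ ((1 : ℝ) / d))) : ℤ) -
      (pBettiPts Kx q r s (Y ω ∩ cubeC d ((n : ℝ) ^ ((1 : ℝ) / d))) : ℤ) with hD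
  set good : Ω → Prop := fun ω => ∃ p : ℤ × ℕ, ∀ n, p.2 ≤ n → D ω n = p.1 with hgood
  refine ⟨fun ω => if h : good ω then (Exists.choose h).1 else 0,
    fun ω => if h : good ω then (Exists.choose h).2 else 0, ?_⟩
  filter_upwards [hP.locallyFinite, hP'.locallyFinite] with ω hPf hP'f
  have hlocY : ∀ C : Set (Pt d), IsCompact C → (Y ω ∩ C).Finite := by
    intro C hC
    have hsub : Y ω ∩ C ⊆ (P ω ∩ C) ∪ (P' ω ∩ C) := by
      rintro x ⟨hx1 | hx2, hxC⟩
      · exact Or.inl ⟨hx1.1, hxC⟩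
      · exact Or.inr ⟨hx2.1, hxC⟩
    exact ((hPf C hC).union (hP'f C hC)).subset hsub
  have hagree : P ω \ W = Y ω \ W := by
    rw [hY]
    ext x
    simp only [Set.mem_diff, Set.mem_union, Set.mem_inter_iff]
    constructor
    · rintro ⟨hx, hxW⟩; exact ⟨Or.inl ⟨hx, hxW⟩, hxW⟩
    · rintro ⟨hx1 | hx2, hxW⟩
      · exact ⟨hx1.1, hxW⟩
      · exact absurd hx2.2 hxW
  have hg : good ω := by
    obtain ⟨R, hR0, hRW⟩ := ASRes.cubeQ_bounded (WithLp.toLp 2 (fun i => (z i : ℝ)) : Pt d)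
    obtain ⟨c, N, hcN⟩ := ASRes.det Kx hKx q r s hr hrs (P ω) (Y ω) W hPf hlocY hagree
      ⟨R, hR0, hRW⟩
    exact ⟨(c, N), hcN⟩
  intro n hn
  simp only [dif_pos hg] at hn ⊢
  exact (Exists.choose_spec hg) n hn
end
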